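/- Let N be a random variable with the Poisson distribution of mean 1, set U = N − 1 and V = (N − 1)² − N. Then there exists a real number α* such that the normalized random variable S = (U + α*V)/√(1 + 2α*²) satisfies E[S²] = 1 and E[S⁴] = 3, while the law of S is not the standard Gaussian distribution N(0,1) on ℝ. -/

import Mathlib

open MeasureTheory ProbabilityTheory
open scoped ENNReal

lemma pw_hasSum_congr {f g : ℕ → ℝ} {a b : ℝ} (h : HasSum f a)
    (hfg : ∀ k, g k = f k) (hab : b = a) : HasSum g b := by
  rw [show g = f from funext hfg, hab]; exact h

noncomputable def pw (k : ℕ) : ℝ := Real.exp (-1) / k.factorial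

lemma pw_nonneg (k : ℕ) : 0 ≤ pw k := by
  unfold pw; positivity

lemma pwH0 : HasSum (fun k : ℕ => (k:ℝ)^0 * pw k) 1 := by
  have h := (NormedSpace.exp_series_hasSum_exp' (𝕂 := ℝ) (1:ℝ)).mul_left (Real.exp (-1))
  have hfun : (fun n : ℕ => Real.exp (-1) * ((n.factorial⁻¹ : ℝ) • (1:ℝ)^n))
      = fun k : ℕ => (k:ℝ)^0 * pw k := by
    funext n; simp [pw, smul_eq_mul, div_eq_mul_inv]
  rw [hfun] at h
  have hval : Real.exp (-1) * NormedSpace.exp (1:ℝ) = 1 := by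
    rw [← Real.exp_eq_exp_ℝ, ← Real.exp_add]; norm_num
  rwa [hval] at h

lemma pw_shift {f : ℕ → ℝ} {s : ℝ} (h : HasSum (fun m => f (m+1) * pw m) s) :
    HasSum (fun k : ℕ => (k:ℝ) * f k * pw k) s := by
  have h0 : ∀ k ∉ Set.range Nat.succ, (k:ℝ) * f k * pw k = 0 := by
    intro k hk
    have hk0 : k = 0 := by
      rcases k with _ | n
      · rfl
      · exact absurd ⟨n, rfl⟩ hk
    simp [hk0]
  apply (Function.Injective.hasSum_iff Nat.succ_injective h0).mp
  have hfun : (fun m : ℕ => (fun k : ℕ => (k:ℝ) * f k * pw k) (Nat.succ m))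
      = fun m : ℕ => f (m+1) * pw m := by
    funext m
    show ((m+1 : ℕ):ℝ) * f (m+1) * pw (m+1) = f (m+1) * pw m
    have h1 : (m.factorial : ℝ) ≠ 0 := Nat.cast_ne_zero.mpr m.factorial_ne_zero
    have h2 : ((m:ℝ)+1) ≠ 0 := by positivity
    simp only [pw, Nat.factorial_succ]
    push_cast
    field_simp
  rw [show ((fun k : ℕ => (k:ℝ) * f k * pw k) ∘ Nat.succ)
      = fun m : ℕ => (fun k : ℕ => (k:ℝ) * f k * pw k) (Nat.succ m) from rfl, hfun]
  exact h

lemma pwH1 : HasSum (fun k : ℕ => (k:ℝ)^1 * pw k) 1 := by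
  have step : HasSum (fun m : ℕ => ((m:ℝ)+1)^0 * pw m) 1 := by
    have h := (pwH0.mul_left 1)
    exact pw_hasSum_congr h (fun k => by ring) (by norm_num)
  have h2 := pw_shift (f := fun k : ℕ => (k:ℝ)^0) (by
    have hfun : (fun m : ℕ => (fun k : ℕ => (k:ℝ)^0) (m+1) * pw m)
        = fun m : ℕ => ((m:ℝ)+1)^0 * pw m := by
      funext m; push_cast; ring
    rw [hfun]; exact step)
  have hfun2 : (fun k : ℕ => (k:ℝ)^1 * pw k)
      = fun k : ℕ => (k:ℝ) * (k:ℝ)^0 * pw k := by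
    funext k; ring
  rw [hfun2]; exact h2

lemma pwH2 : HasSum (fun k : ℕ => (k:ℝ)^2 * pw k) 2 := by
  have step : HasSum (fun m : ℕ => ((m:ℝ)+1)^1 * pw m) 2 := by
    have h := ((pwH0.mul_left 1).add (pwH1.mul_left 1))
    exact pw_hasSum_congr h (fun k => by ring) (by norm_num)
  have h2 := pw_shift (f := fun k : ℕ => (k:ℝ)^1) (by
    have hfun : (fun m : ℕ => (fun k : ℕ => (k:ℝ)^1) (m+1) * pw m)
        = fun m : ℕ => ((m:ℝ)+1)^1 * pw m := by
      funext m; push_cast; ring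
    rw [hfun]; exact step)
  have hfun2 : (fun k : ℕ => (k:ℝ)^2 * pw k)
      = fun k : ℕ => (k:ℝ) * (k:ℝ)^1 * pw k := by
    funext k; ring
  rw [hfun2]; exact h2

lemma pwH3 : HasSum (fun k : ℕ => (k:ℝ)^3 * pw k) 5 := by
  have step : HasSum (fun m : ℕ => ((m:ℝ)+1)^2 * pw m) 5 := by
    have h := (((pwH0.mul_left 1).add (pwH1.mul_left 2)).add (pwH2.mul_left 1))
    exact pw_hasSum_congr h (fun k => by ring) (by norm_num)
  have h2 := pw_shift (f := fun k : ℕ => (k:ℝ)^2) (by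
    have hfun : (fun m : ℕ => (fun k : ℕ => (k:ℝ)^2) (m+1) * pw m)
        = fun m : ℕ => ((m:ℝ)+1)^2 * pw m := by
      funext m; push_cast; ring
    rw [hfun]; exact step)
  have hfun2 : (fun k : ℕ => (k:ℝ)^3 * pw k)
      = fun k : ℕ => (k:ℝ) * (k:ℝ)^2 * pw k := by
    funext k; ring
  rw [hfun2]; exact h2

lemma pwH4 : HasSum (fun k : ℕ => (k:ℝ)^4 * pw k) 15 := by
  have step : HasSum (fun m : ℕ => ((m:ℝ)+1)^3 * pw m) 15 := by
    have h := ((((pwH0.mul_left 1).add (pwH1.mul_left 3)).add (pwH2.mul_left 3)).add (pwH3.mul_left 1))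
    exact pw_hasSum_congr h (fun k => by ring) (by norm_num)
  have h2 := pw_shift (f := fun k : ℕ => (k:ℝ)^3) (by
    have hfun : (fun m : ℕ => (fun k : ℕ => (k:ℝ)^3) (m+1) * pw m)
        = fun m : ℕ => ((m:ℝ)+1)^3 * pw m := by
      funext m; push_cast; ring
    rw [hfun]; exact step)
  have hfun2 : (fun k : ℕ => (k:ℝ)^4 * pw k)
      = fun k : ℕ => (k:ℝ) * (k:ℝ)^3 * pw k := by
    funext k; ring
  rw [hfun2]; exact h2

lemma pwH5 : HasSum (fun k : ℕ => (k:ℝ)^5 * pw k) 52 := by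
  have step : HasSum (fun m : ℕ => ((m:ℝ)+1)^4 * pw m) 52 := by
    have h := (((((pwH0.mul_left 1).add (pwH1.mul_left 4)).add (pwH2.mul_left 6)).add (pwH3.mul_left 4)).add (pwH4.mul_left 1))
    exact pw_hasSum_congr h (fun k => by ring) (by norm_num)
  have h2 := pw_shift (f := fun k : ℕ => (k:ℝ)^4) (by
    have hfun : (fun m : ℕ => (fun k : ℕ => (k:ℝ)^4) (m+1) * pw m)
        = fun m : ℕ => ((m:ℝ)+1)^4 * pw m := by
      funext m; push_cast; ring
    rw [hfun]; exact step)
  have hfun2 : (fun k : ℕ => (k:ℝ)^5 * pw k)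
      = fun k : ℕ => (k:ℝ) * (k:ℝ)^4 * pw k := by
    funext k; ring
  rw [hfun2]; exact h2

lemma pwH6 : HasSum (fun k : ℕ => (k:ℝ)^6 * pw k) 203 := by
  have step : HasSum (fun m : ℕ => ((m:ℝ)+1)^5 * pw m) 203 := by
    have h := ((((((pwH0.mul_left 1).add (pwH1.mul_left 5)).add (pwH2.mul_left 10)).add (pwH3.mul_left 10)).add (pwH4.mul_left 5)).add (pwH5.mul_left 1))
    exact pw_hasSum_congr h (fun k => by ring) (by norm_num)
  have h2 := pw_shift (f := fun k : ℕ => (k:ℝ)^5) (by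
    have hfun : (fun m : ℕ => (fun k : ℕ => (k:ℝ)^5) (m+1) * pw m)
        = fun m : ℕ => ((m:ℝ)+1)^5 * pw m := by
      funext m; push_cast; ring
    rw [hfun]; exact step)
  have hfun2 : (fun k : ℕ => (k:ℝ)^6 * pw k)
      = fun k : ℕ => (k:ℝ) * (k:ℝ)^5 * pw k := by
    funext k; ring
  rw [hfun2]; exact h2

lemma pwH7 : HasSum (fun k : ℕ => (k:ℝ)^7 * pw k) 877 := by
  have step : HasSum (fun m : ℕ => ((m:ℝ)+1)^6 * pw m) 877 := by
    have h := (((((((pwH0.mul_left 1).add (pwH1.mul_left 6)).add (pwH2.mul_left 15)).add (pwH3.mul_left 20)).add (pwH4.mul_left 15)).add (pwH5.mul_left 6)).add (pwH6.mul_left 1))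
    exact pw_hasSum_congr h (fun k => by ring) (by norm_num)
  have h2 := pw_shift (f := fun k : ℕ => (k:ℝ)^6) (by
    have hfun : (fun m : ℕ => (fun k : ℕ => (k:ℝ)^6) (m+1) * pw m)
        = fun m : ℕ => ((m:ℝ)+1)^6 * pw m := by
      funext m; push_cast; ring
    rw [hfun]; exact step)
  have hfun2 : (fun k : ℕ => (k:ℝ)^7 * pw k)
      = fun k : ℕ => (k:ℝ) * (k:ℝ)^6 * pw k := by
    funext k; ring
  rw [hfun2]; exact h2

lemma pwH8 : HasSum (fun k : ℕ => (k:ℝ)^8 * pw k) 4140 := by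
  have step : HasSum (fun m : ℕ => ((m:ℝ)+1)^7 * pw m) 4140 := by
    have h := ((((((((pwH0.mul_left 1).add (pwH1.mul_left 7)).add (pwH2.mul_left 21)).add (pwH3.mul_left 35)).add (pwH4.mul_left 35)).add (pwH5.mul_left 21)).add (pwH6.mul_left 7)).add (pwH7.mul_left 1))
    exact pw_hasSum_congr h (fun k => by ring) (by norm_num)
  have h2 := pw_shift (f := fun k : ℕ => (k:ℝ)^7) (by
    have hfun : (fun m : ℕ => (fun k : ℕ => (k:ℝ)^7) (m+1) * pw m)
        = fun m : ℕ => ((m:ℝ)+1)^7 * pw m := by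
      funext m; push_cast; ring
    rw [hfun]; exact step)
  have hfun2 : (fun k : ℕ => (k:ℝ)^8 * pw k)
      = fun k : ℕ => (k:ℝ) * (k:ℝ)^7 * pw k := by
    funext k; ring
  rw [hfun2]; exact h2

lemma pwG2 (α : ℝ) : HasSum
    (fun k : ℕ => ((k:ℝ) - 1 + α * (((k:ℝ) - 1)^2 - (k:ℝ)))^2 * pw k)
    (1 + 2*α^2) := by
  have h := (((((pwH0.mul_left (1 - 2*α + α^2)).add (pwH1.mul_left (-2 + 8*α - 6*α^2))).add (pwH2.mul_left (1 - 8*α + 11*α^2))).add (pwH3.mul_left (2*α - 6*α^2))).add (pwH4.mul_left (α^2)))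
  exact pw_hasSum_congr h (fun k => by ring) (by ring)

lemma pwG4 (α : ℝ) : HasSum
    (fun k : ℕ => ((k:ℝ) - 1 + α * (((k:ℝ) - 1)^2 - (k:ℝ)))^4 * pw k)
    (4 + 24*α + 108*α^2 + 224*α^3 + 212*α^4) := by
  have h := (((((((((pwH0.mul_left (1 - 4*α + 6*α^2 - 4*α^3 + α^4)).add (pwH1.mul_left (-4 + 24*α - 48*α^2 + 40*α^3 - 12*α^4))).add (pwH2.mul_left (6 - 52*α + 144*α^2 - 156*α^3 + 58*α^4))).add (pwH3.mul_left (-4 + 52*α - 204*α^2 + 300*α^3 - 144*α^4))).add (pwH4.mul_left (1 - 24*α + 144*α^2 - 300*α^3 + 195*α^4))).add (pwH5.mul_left (4*α - 48*α^2 + 156*α^3 - 144*α^4))).add (pwH6.mul_left (6*α^2 - 40*α^3 + 58*α^4))).add (pwH7.mul_left (4*α^3 - 12*α^4))).add (pwH8.mul_left (α^4)))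
  exact pw_hasSum_congr h (fun k => by ring) (by ring)


lemma key_integral {Ω : Type*} [MeasurableSpace Ω] (μ : Measure Ω) [IsProbabilityMeasure μ]
    (N : Ω → ℕ) (hN : Measurable N)
    (hlaw : ∀ k : ℕ, μ {ω | N ω = k} = ENNReal.ofReal (Real.exp (-1) / k.factorial))
    (f : ℕ → ℝ) (hf0 : ∀ k, 0 ≤ f k) {s : ℝ}
    (hf : HasSum (fun k => f k * pw k) s) :
    ∫ ω, f (N ω) ∂μ = s := by
  have hpk : ∀ k : ℕ, poissonPMF 1 k = ENNReal.ofReal (pw k) := by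
    intro k
    show ENNReal.ofReal (poissonPMFReal 1 k) = ENNReal.ofReal (pw k)
    simp [poissonPMFReal, pw]
  have hmap : Measure.map N μ = (poissonPMF 1).toMeasure := by
    apply Measure.ext_of_singleton
    intro k
    rw [Measure.map_apply hN (measurableSet_singleton k),
      PMF.toMeasure_apply_singleton _ _ (measurableSet_singleton k), hpk k]
    have hpre : N ⁻¹' {k} = {ω | N ω = k} := rfl
    rw [hpre, hlaw k]
    rfl
  have hint : Integrable f ((poissonPMF 1).toMeasure) := by
    constructor
    · exact measurable_from_nat.aestronglyMeasurable
    · rw [HasFiniteIntegral, lintegral_countable']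
      have heq : ∀ k : ℕ, ‖f k‖ₑ * (poissonPMF 1).toMeasure {k}
          = ENNReal.ofReal (f k * pw k) := by
        intro k
        rw [PMF.toMeasure_apply_singleton _ _ (measurableSet_singleton k), hpk k,
          Real.enorm_eq_ofReal (hf0 k), ← ENNReal.ofReal_mul (hf0 k)]
      rw [tsum_congr heq,
        ← ENNReal.ofReal_tsum_of_nonneg (fun k => mul_nonneg (hf0 k) (pw_nonneg k)) hf.summable]
      exact ENNReal.ofReal_lt_top
  calc ∫ ω, f (N ω) ∂μ = ∫ k, f k ∂(Measure.map N μ) :=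
        (integral_map hN.aemeasurable measurable_from_nat.aestronglyMeasurable).symm
    _ = ∑' k, ((poissonPMF 1) k).toReal • f k := by
        rw [hmap]; exact PMF.integral_eq_tsum _ _ hint
    _ = ∑' k, f k * pw k := by
        apply tsum_congr
        intro k
        rw [hpk k, ENNReal.toReal_ofReal (pw_nonneg k), smul_eq_mul, mul_comm]
    _ = s := hf.tsum_eq
/-- If `N ∼ Poisson(1)`, `U = N − 1` and `V = (N − 1)² − N`, then there is a
real `α*` such that `S = (U + α*V)/√(1 + 2α*²)` satisfies `E[S²] = 1` and
`E[S⁴] = 3`, while the law of `S` is not the standard Gaussian `N(0,1)`. -/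
theorem poisson_counterexample_not_gaussian
    {Ω : Type*} [MeasurableSpace Ω] (μ : Measure Ω) [IsProbabilityMeasure μ]
    (N : Ω → ℕ) (hN : Measurable N)
    (hlaw : ∀ k : ℕ, μ {ω | N ω = k} = ENNReal.ofReal (Real.exp (-1) / k.factorial))
    (U V : Ω → ℝ) (hU : U = fun ω => (N ω : ℝ) - 1)
    (hV : V = fun ω => ((N ω : ℝ) - 1) ^ 2 - N ω) :
    ∃ α : ℝ, ∀ S : Ω → ℝ,
      S = (fun ω => (U ω + α * V ω) / Real.sqrt (1 + 2 * α ^ 2)) →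
        (∫ ω, S ω ^ 2 ∂μ) = 1 ∧ (∫ ω, S ω ^ 4 ∂μ) = 3
        ∧ Measure.map S μ ≠ gaussianReal 0 1 := by
  have hcont : Continuous (fun x : ℝ => 200*x^4+224*x^3+96*x^2+24*x+1) := by continuity
  have hmem : (0:ℝ) ∈ Set.Icc ((fun x : ℝ => 200*x^4+224*x^3+96*x^2+24*x+1) (-1/10))
      ((fun x : ℝ => 200*x^4+224*x^3+96*x^2+24*x+1) 0) := by
    norm_num
  obtain ⟨α, -, hα⟩ := intermediate_value_Icc (by norm_num : (-1/10:ℝ) ≤ 0)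
    hcont.continuousOn hmem
  have hroot : 200*α^4+224*α^3+96*α^2+24*α+1 = 0 := hα
  refine ⟨α, fun S hS => ?_⟩
  subst hU hV hS
  have hc : (0:ℝ) < 1 + 2*α^2 := by positivity
  have hsq : Real.sqrt (1 + 2*α^2) ^ 2 = 1 + 2*α^2 := Real.sq_sqrt hc.le
  have hsq4 : Real.sqrt (1 + 2*α^2) ^ 4 = (1 + 2*α^2)^2 := by
    rw [show (4:ℕ) = 2*2 from rfl, pow_mul, hsq]
  have hNR : Measurable fun ω => (N ω : ℝ) :=
    (measurable_from_nat (f := (Nat.cast : ℕ → ℝ))).comp hN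
  have hSm : Measurable fun ω =>
      ((N ω : ℝ) - 1 + α * (((N ω : ℝ) - 1) ^ 2 - (N ω : ℝ))) / Real.sqrt (1 + 2 * α ^ 2) := by
    fun_prop
  refine ⟨?_, ?_, ?_⟩
  · have hsum : HasSum (fun k : ℕ =>
        ((((k:ℝ) - 1 + α * (((k:ℝ) - 1)^2 - (k:ℝ)))^2) / (1 + 2*α^2)) * pw k) 1 := by
      have h := (pwG2 α).div_const (1 + 2*α^2)
      exact pw_hasSum_congr h (fun k => by ring) (by field_simp)
    have key := key_integral μ N hN hlaw
      (fun k => (((k:ℝ) - 1 + α * (((k:ℝ) - 1)^2 - (k:ℝ)))^2) / (1 + 2*α^2))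
      (fun k => by positivity) hsum
    refine Eq.trans ?_ key
    refine integral_congr_ae (Filter.Eventually.of_forall fun ω => ?_)
    show (((N ω : ℝ) - 1 + α * (((N ω : ℝ) - 1) ^ 2 - (N ω : ℝ))) / Real.sqrt (1 + 2 * α ^ 2)) ^ 2
      = _
    rw [div_pow, hsq]
  · have hval : (4 + 24*α + 108*α^2 + 224*α^3 + 212*α^4) / ((1 + 2*α^2)^2) = 3 := by
      rw [div_eq_iff (by positivity : ((1 + 2*α^2)^2 : ℝ) ≠ 0)]
      linear_combination hroot
    have hsum : HasSum (fun k : ℕ =>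
        ((((k:ℝ) - 1 + α * (((k:ℝ) - 1)^2 - (k:ℝ)))^4) / ((1 + 2*α^2)^2)) * pw k) 3 := by
      have h := (pwG4 α).div_const ((1 + 2*α^2)^2)
      exact pw_hasSum_congr h (fun k => by ring) hval.symm
    have key := key_integral μ N hN hlaw
      (fun k => (((k:ℝ) - 1 + α * (((k:ℝ) - 1)^2 - (k:ℝ)))^4) / ((1 + 2*α^2)^2))
      (fun k => by positivity) hsum
    refine Eq.trans ?_ key
    refine integral_congr_ae (Filter.Eventually.of_forall fun ω => ?_)
    show (((N ω : ℝ) - 1 + α * (((N ω : ℝ) - 1) ^ 2 - (N ω : ℝ))) / Real.sqrt (1 + 2 * α ^ 2)) ^ 4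
      = _
    rw [div_pow, hsq4]
  · intro hcontra
    set t : ℝ := ((1:ℝ) - 1 + α * (((1:ℝ) - 1)^2 - 1)) / Real.sqrt (1 + 2*α^2) with ht
    have hsub : {ω | N ω = 1} ⊆
        (fun ω => ((N ω : ℝ) - 1 + α * (((N ω : ℝ) - 1) ^ 2 - (N ω : ℝ)))
          / Real.sqrt (1 + 2 * α ^ 2)) ⁻¹' {t} := by
      intro ω hω
      have h1 : N ω = 1 := hω
      simp [Set.mem_preimage, h1, ht]
    have hpos : 0 < Measure.map (fun ω =>
        ((N ω : ℝ) - 1 + α * (((N ω : ℝ) - 1) ^ 2 - (N ω : ℝ)))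
          / Real.sqrt (1 + 2 * α ^ 2)) μ {t} := by
      rw [Measure.map_apply hSm (measurableSet_singleton t)]
      refine lt_of_lt_of_le ?_ (measure_mono hsub)
      rw [hlaw 1]
      refine ENNReal.ofReal_pos.mpr ?_
      positivity
    rw [hcontra] at hpos
    have hzero : gaussianReal 0 1 {t} = 0 :=
      gaussianReal_absolutelyContinuous 0 (by norm_num) (measure_singleton t)
    rw [hzero] at hpos
    exact lt_irrefl 0 hpos
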